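/- arXiv:2101.02473 — 2 statements merged into one kernel-verified Lean document; each statement's English description precedes it below -/
import Mathlib

section
/- Let a₁, a₂ > 0 and α ∈ ℝ, and define f : ℝ → ℝ by f(y) = 1/(a₁² + y²) for |y| ≤ 1 and f(y) = α/(a₂² + y²) for |y| > 1. Then for every x ∈ (−1,1), the principal value PV∫_ℝ f(y)/(x−y) dy exists and equals (2x/a₁)·arctan(1/a₁)/(a₁² + x²) + (2αx/a₂)·arctan(a₂)/(a₂² + x²) − (1/(a₁² + x²) − α/(a₂² + x²))·log((1−x)/(1+x)). -/
open MeasureTheory Filter Set Topology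
open Real

noncomputable def pvF (a x y : ℝ) : ℝ :=
  x / a * Real.arctan (y / a) + Real.log (a ^ 2 + y ^ 2) / 2 - Real.log (x - y)

lemma pvF_hasDerivAt {a : ℝ} (ha : 0 < a) (x : ℝ) {y : ℝ} (hxy : y ≠ x) :
    HasDerivAt (pvF a x) ((a ^ 2 + x ^ 2) / ((a ^ 2 + y ^ 2) * (x - y))) y := by
  have hay : (0:ℝ) < a ^ 2 + y ^ 2 := by positivity
  have hsub : x - y ≠ 0 := sub_ne_zero.mpr (Ne.symm hxy)
  have h1 : HasDerivAt (fun y : ℝ => x / a * Real.arctan (y / a))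
      (x / a * (1 / (1 + (y / a) ^ 2) * (1 / a))) y := by
    exact ((Real.hasDerivAt_arctan (y / a)).comp y
      ((hasDerivAt_id y).div_const a)).const_mul (x / a)
  have h2 : HasDerivAt (fun y : ℝ => Real.log (a ^ 2 + y ^ 2) / 2)
      ((a ^ 2 + y ^ 2)⁻¹ * (2 * y ^ 1) / 2) y := by
    exact ((Real.hasDerivAt_log hay.ne').comp y
      ((hasDerivAt_pow 2 y).const_add (a ^ 2))).div_const 2
  have h3 : HasDerivAt (fun y : ℝ => Real.log (x - y)) ((x - y)⁻¹ * (-1)) y := by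
    exact (Real.hasDerivAt_log hsub).comp y ((hasDerivAt_id y).const_sub x)
  have := (h1.add h2).sub h3
  refine HasDerivAt.congr_deriv this ?_
  have ha' : a ≠ 0 := ha.ne'
  have hya : 1 + (y / a) ^ 2 ≠ 0 := by positivity
  field_simp
  ring

lemma pv_ratio_aux (a x : ℝ) {y : ℝ} (hy : y ≠ 0) (hxy : y ≠ x) :
    (a ^ 2 + y ^ 2) / (x - y) ^ 2
      = (a ^ 2 * (y⁻¹) ^ 2 + 1) / ((x * y⁻¹ - 1) ^ 2) := by
  have hsub : x - y ≠ 0 := sub_ne_zero.mpr (Ne.symm hxy)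
  have e : x * y⁻¹ - 1 = (x - y) / y := by field_simp
  have h2 : (x * y⁻¹ - 1) ^ 2 ≠ 0 := pow_ne_zero 2 (by rw [e]; exact div_ne_zero hsub hy)
  rw [div_eq_div_iff (pow_ne_zero 2 hsub) h2]
  field_simp

lemma pv_ratio_cont (a x : ℝ) : Tendsto (fun t : ℝ => (a ^ 2 * t ^ 2 + 1) / ((x * t - 1) ^ 2))
    (𝓝 0) (𝓝 1) := by
  have : ContinuousAt (fun t : ℝ => (a ^ 2 * t ^ 2 + 1) / ((x * t - 1) ^ 2)) 0 := by
    apply ContinuousAt.div (by fun_prop) (by fun_prop)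
    norm_num
  simpa using this.tendsto

lemma pv_ratio_atTop (a x : ℝ) :
    Tendsto (fun y : ℝ => (a ^ 2 + y ^ 2) / (x - y) ^ 2) atTop (𝓝 1) := by
  have h := (pv_ratio_cont a x).comp tendsto_inv_atTop_zero
  apply h.congr'
  filter_upwards [eventually_gt_atTop (max x 0)] with y hy
  rw [Function.comp_apply]
  exact (pv_ratio_aux a x (ne_of_gt (lt_of_le_of_lt (le_max_right x 0) hy))
    (ne_of_gt (lt_of_le_of_lt (le_max_left x 0) hy))).symm

lemma pv_inv_atBot : Tendsto (fun y : ℝ => y⁻¹) atBot (𝓝 0) := by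
  have := (tendsto_inv_atTop_zero.comp tendsto_neg_atBot_atTop (α := ℝ)).neg
  simp only [Function.comp_def, inv_neg, neg_neg, neg_zero] at this
  exact this

lemma pv_ratio_atBot (a x : ℝ) :
    Tendsto (fun y : ℝ => (a ^ 2 + y ^ 2) / (x - y) ^ 2) atBot (𝓝 1) := by
  have h := (pv_ratio_cont a x).comp pv_inv_atBot
  apply h.congr'
  filter_upwards [eventually_lt_atBot (min x 0)] with y hy
  rw [Function.comp_apply]
  exact (pv_ratio_aux a x (ne_of_lt (lt_of_lt_of_le hy (min_le_right x 0)))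
    (ne_of_lt (lt_of_lt_of_le hy (min_le_left x 0)))).symm



lemma pvF_tendsto_atTop {a : ℝ} (ha : 0 < a) (x : ℝ) :
    Tendsto (pvF a x) atTop (𝓝 (x / a * (π / 2))) := by
  have hA : Tendsto (fun y : ℝ => x / a * Real.arctan (y / a)) atTop (𝓝 (x / a * (π / 2))) := by
    exact (((tendsto_nhds_of_tendsto_nhdsWithin Real.tendsto_arctan_atTop).comp
      (tendsto_id.atTop_div_const ha)).const_mul (x / a))
  have hB : Tendsto (fun y : ℝ => Real.log (a ^ 2 + y ^ 2) / 2 - Real.log (x - y)) atTop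
      (𝓝 0) := by
    have hlog : Tendsto (fun y : ℝ => Real.log ((a ^ 2 + y ^ 2) / (x - y) ^ 2) / 2) atTop
        (𝓝 0) := by
      have := ((Real.continuousAt_log one_ne_zero).tendsto.comp (pv_ratio_atTop a x)).div_const 2
      simpa using this
    apply hlog.congr'
    filter_upwards [eventually_gt_atTop (max x a)] with y hy
    have hyx : x < y := lt_of_le_of_lt (le_max_left x a) hy
    have hy0 : 0 < y := lt_of_le_of_lt (le_trans ha.le (le_max_right x a)) hy
    have hay : (0:ℝ) < a ^ 2 + y ^ 2 := by positivity
    have hsub : (0:ℝ) < y - x := by linarith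
    rw [Real.log_div hay.ne' (pow_ne_zero 2 (sub_ne_zero.mpr hyx.ne)), Real.log_pow]
    push_cast
    ring
  have := hA.add hB
  simpa using this.congr (fun y => by unfold pvF; ring)



lemma pvF_tendsto_atBot {a : ℝ} (ha : 0 < a) (x : ℝ) :
    Tendsto (pvF a x) atBot (𝓝 (x / a * (-(π / 2)))) := by
  have hA : Tendsto (fun y : ℝ => x / a * Real.arctan (y / a)) atBot (𝓝 (x / a * (-(π / 2)))) := by
    exact (((tendsto_nhds_of_tendsto_nhdsWithin Real.tendsto_arctan_atBot).comp
      (tendsto_id.atBot_div_const ha)).const_mul (x / a))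
  have hB : Tendsto (fun y : ℝ => Real.log (a ^ 2 + y ^ 2) / 2 - Real.log (x - y)) atBot
      (𝓝 0) := by
    have hlog : Tendsto (fun y : ℝ => Real.log ((a ^ 2 + y ^ 2) / (x - y) ^ 2) / 2) atBot
        (𝓝 0) := by
      have := ((Real.continuousAt_log one_ne_zero).tendsto.comp (pv_ratio_atBot a x)).div_const 2
      simpa using this
    apply hlog.congr'
    filter_upwards [eventually_lt_atBot x] with y hy
    have hay : (0:ℝ) < a ^ 2 + y ^ 2 := by positivity
    have hne : x - y ≠ 0 := sub_ne_zero.mpr hy.ne'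
    rw [Real.log_div hay.ne' (pow_ne_zero 2 hne), Real.log_pow]
    push_cast
    ring
  have := hA.add hB
  simpa using this.congr (fun y => by unfold pvF; ring)



lemma pv_integral_interval {c a x u v : ℝ} (ha : 0 < a) (h : x ∉ Set.uIcc u v) :
    ∫ y in u..v, c / ((a ^ 2 + y ^ 2) * (x - y))
      = c / (a ^ 2 + x ^ 2) * (pvF a x v - pvF a x u) := by
  have hax : (0:ℝ) < a ^ 2 + x ^ 2 := by positivity
  have hderiv : ∀ y ∈ Set.uIcc u v,
      HasDerivAt (fun y => c / (a ^ 2 + x ^ 2) * pvF a x y)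
        (c / ((a ^ 2 + y ^ 2) * (x - y))) y := by
    intro y hy
    have hxy : y ≠ x := fun hxy => h (hxy ▸ hy)
    have := (pvF_hasDerivAt ha x hxy).const_mul (c / (a ^ 2 + x ^ 2))
    refine HasDerivAt.congr_deriv this ?_
    have hay : (0:ℝ) < a ^ 2 + y ^ 2 := by positivity
    have hsub : x - y ≠ 0 := sub_ne_zero.mpr (Ne.symm hxy)
    rw [mul_div_assoc', div_mul_cancel₀ _ hax.ne']
  have hcont : ContinuousOn (fun y => c / ((a ^ 2 + y ^ 2) * (x - y))) (Set.uIcc u v) := by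
    apply continuousOn_const.div
    · fun_prop
    · intro y hy
      have hxy : y ≠ x := fun hxy => h (hxy ▸ hy)
      have hay : (0:ℝ) < a ^ 2 + y ^ 2 := by positivity
      have hsub : x - y ≠ 0 := sub_ne_zero.mpr (Ne.symm hxy)
      exact mul_ne_zero hay.ne' hsub
  rw [intervalIntegral.integral_eq_sub_of_hasDerivAt hderiv
    (hcont.intervalIntegrable)]
  ring

lemma pv_integrableOn_tail {c a x d : ℝ} (ha : 0 < a) (hd : 0 < d) {s : Set ℝ}
    (hs : MeasurableSet s) (h : ∀ y ∈ s, d ≤ |x - y|) :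
    IntegrableOn (fun y => c / ((a ^ 2 + y ^ 2) * (x - y))) s := by
  have hg : Integrable (fun y : ℝ => |c| / (d * a ^ 2) * (1 + (y / a) ^ 2)⁻¹) :=
    (integrable_inv_one_add_sq.comp_div ha.ne').const_mul _
  refine Integrable.mono (hg.integrableOn) ?_ ?_
  · apply Measurable.aestronglyMeasurable
    exact Measurable.div measurable_const (by fun_prop)
  · rw [ae_restrict_iff' hs]
    filter_upwards with y hy
    have hay : (0:ℝ) < a ^ 2 + y ^ 2 := by positivity
    have hdy := h y hy
    rw [Real.norm_eq_abs, Real.norm_eq_abs]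
    have hRHS : |c| / (d * a ^ 2) * (1 + (y / a) ^ 2)⁻¹ = |c| / ((a ^ 2 + y ^ 2) * d) := by
      field_simp
    rw [abs_div, abs_mul, abs_of_pos hay, hRHS,
      abs_of_nonneg (show (0:ℝ) ≤ |c| / ((a ^ 2 + y ^ 2) * d) by positivity)]
    gcongr



lemma pv_deriv_scaled {c a x : ℝ} (ha : 0 < a) {y : ℝ} (hxy : y ≠ x) :
    HasDerivAt (fun y => c / (a ^ 2 + x ^ 2) * pvF a x y)
      (c / ((a ^ 2 + y ^ 2) * (x - y))) y := by
  have hax : (0:ℝ) < a ^ 2 + x ^ 2 := by positivity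
  have hay : (0:ℝ) < a ^ 2 + y ^ 2 := by positivity
  have hsub : x - y ≠ 0 := sub_ne_zero.mpr (Ne.symm hxy)
  have := (pvF_hasDerivAt ha x hxy).const_mul (c / (a ^ 2 + x ^ 2))
  refine HasDerivAt.congr_deriv this ?_
  rw [mul_div_assoc', div_mul_cancel₀ _ hax.ne']

lemma pv_integral_Ioi {c a x b : ℝ} (ha : 0 < a) (hb : x < b) :
    ∫ y in Set.Ioi b, c / ((a ^ 2 + y ^ 2) * (x - y))
      = c / (a ^ 2 + x ^ 2) * (x / a * (π / 2) - pvF a x b) := by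
  have hint : IntegrableOn (fun y => c / ((a ^ 2 + y ^ 2) * (x - y))) (Set.Ioi b) := by
    apply pv_integrableOn_tail ha (show (0:ℝ) < b - x by linarith) measurableSet_Ioi
    intro y hy
    rw [abs_sub_comm, abs_of_pos (by simp at hy; linarith)]
    simp at hy; linarith
  rw [integral_Ioi_of_hasDerivAt_of_tendsto'
    (fun y hy => pv_deriv_scaled ha (by rintro rfl; exact absurd hy.out (not_le.mpr hb)))
    hint ((pvF_tendsto_atTop ha x).const_mul (c / (a ^ 2 + x ^ 2)))]
  ring

lemma pv_integral_Iic {c a x b : ℝ} (ha : 0 < a) (hb : b < x) :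
    ∫ y in Set.Iic b, c / ((a ^ 2 + y ^ 2) * (x - y))
      = c / (a ^ 2 + x ^ 2) * (pvF a x b + x / a * (π / 2)) := by
  have hint : IntegrableOn (fun y => c / ((a ^ 2 + y ^ 2) * (x - y))) (Set.Iic b) := by
    apply pv_integrableOn_tail ha (show (0:ℝ) < x - b by linarith) measurableSet_Iic
    intro y hy
    rw [abs_of_pos (by simp at hy; linarith)]
    simp at hy; linarith
  rw [integral_Iic_of_hasDerivAt_of_tendsto'
    (fun y hy => pv_deriv_scaled ha (by rintro rfl; exact absurd hy.out (not_le.mpr hb)))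
    hint ((pvF_tendsto_atBot ha x).const_mul (c / (a ^ 2 + x ^ 2)))]
  ring



lemma pv_integrableOn_compact {c a x u v : ℝ} (ha : 0 < a) (h : x ∉ Set.Icc u v) :
    IntegrableOn (fun y => c / ((a ^ 2 + y ^ 2) * (x - y))) (Set.Icc u v) := by
  apply ContinuousOn.integrableOn_Icc
  apply continuousOn_const.div (by fun_prop)
  intro y hy
  have hxy : y ≠ x := fun hxy => h (hxy ▸ hy)
  have hay : (0:ℝ) < a ^ 2 + y ^ 2 := by positivity
  exact mul_ne_zero hay.ne' (sub_ne_zero.mpr (Ne.symm hxy))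

/-- For the piecewise function `f(y) = 1/(a₁² + y²)` for `|y| ≤ 1` and
`f(y) = α/(a₂² + y²)` for `|y| > 1`, and every `x ∈ (−1,1)`, the principal value
`PV∫_ℝ f(y)/(x−y) dy` exists and equals
`(2x/a₁)·arctan(1/a₁)/(a₁² + x²) + (2αx/a₂)·arctan(a₂)/(a₂² + x²)
  − (1/(a₁² + x²) − α/(a₂² + x²))·log((1−x)/(1+x))`. -/
theorem pv_piecewise_lorentzian (a₁ a₂ α : ℝ) (h₁ : 0 < a₁) (h₂ : 0 < a₂)
    (x : ℝ) (hx : x ∈ Ioo (-1 : ℝ) 1) :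
    Tendsto
      (fun ε : ℝ => ∫ y in {y : ℝ | ε < |y - x|},
        (if |y| ≤ 1 then 1 / (a₁ ^ 2 + y ^ 2) else α / (a₂ ^ 2 + y ^ 2)) / (x - y))
      (𝓝[>] 0)
      (𝓝 ((2 * x / a₁) * Real.arctan (1 / a₁) / (a₁ ^ 2 + x ^ 2)
        + (2 * α * x / a₂) * Real.arctan a₂ / (a₂ ^ 2 + x ^ 2)
        - (1 / (a₁ ^ 2 + x ^ 2) - α / (a₂ ^ 2 + x ^ 2))
          * Real.log ((1 - x) / (1 + x)))) := by
  obtain ⟨hx1, hx2⟩ := hx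
  set φ : ℝ → ℝ := fun t => x / a₁ * Real.arctan (t / a₁) + Real.log (a₁ ^ 2 + t ^ 2) / 2
    with hφdef
  set E : ℝ → ℝ := fun ε =>
    1 / (a₁ ^ 2 + x ^ 2) * ((φ (x - ε) - φ (x + ε)) + (pvF a₁ x 1 - pvF a₁ x (-1)))
    + (α / (a₂ ^ 2 + x ^ 2) * (pvF a₂ x (-1) + x / a₂ * (π / 2))
       + α / (a₂ ^ 2 + x ^ 2) * (x / a₂ * (π / 2) - pvF a₂ x 1)) with hEdef
  set δ : ℝ := min (1 - x) (1 + x) with hδdef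
  have hδ : 0 < δ := lt_min (by linarith) (by linarith)
  -- Step 1: eventual equality
  have heq : ∀ᶠ ε in 𝓝[>] (0:ℝ),
      (∫ y in {y : ℝ | ε < |y - x|},
        (if |y| ≤ 1 then 1 / (a₁ ^ 2 + y ^ 2) else α / (a₂ ^ 2 + y ^ 2)) / (x - y)) = E ε := by
    filter_upwards [Ioo_mem_nhdsGT_of_mem (Set.mem_Ico.mpr ⟨le_refl 0, hδ⟩)] with ε hε
    obtain ⟨hε0, hεδ⟩ := hε
    have hε1 : ε < 1 - x := lt_of_lt_of_le hεδ (min_le_left _ _)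
    have hε2 : ε < 1 + x := lt_of_lt_of_le hεδ (min_le_right _ _)
    set h : ℝ → ℝ := fun y =>
      (if |y| ≤ 1 then 1 / (a₁ ^ 2 + y ^ 2) else α / (a₂ ^ 2 + y ^ 2)) / (x - y) with hhdef
    -- congruence facts
    have hc1 : Set.EqOn (fun y => α / ((a₂ ^ 2 + y ^ 2) * (x - y))) h (Set.Iio (-1)) := by
      intro y hy
      simp only [Set.mem_Iio] at hy
      simp only [hhdef]
      rw [if_neg (by rw [abs_le]; push_neg; intro h'; linarith), div_div]
    have hc2 : Set.EqOn (fun y => 1 / ((a₁ ^ 2 + y ^ 2) * (x - y))) h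
        (Set.Ico (-1) (x - ε)) := by
      intro y hy
      obtain ⟨hya, hyb⟩ := hy
      simp only [hhdef]
      rw [if_pos (abs_le.mpr ⟨hya, by linarith⟩), div_div]
    have hc3 : Set.EqOn (fun y => 1 / ((a₁ ^ 2 + y ^ 2) * (x - y))) h
        (Set.Ioc (x + ε) 1) := by
      intro y hy
      obtain ⟨hya, hyb⟩ := hy
      simp only [hhdef]
      rw [if_pos (abs_le.mpr ⟨by linarith, hyb⟩), div_div]
    have hc4 : Set.EqOn (fun y => α / ((a₂ ^ 2 + y ^ 2) * (x - y))) h (Set.Ioi 1) := by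
      intro y hy
      simp only [Set.mem_Ioi] at hy
      simp only [hhdef]
      rw [if_neg (by rw [abs_le]; push_neg; intro h'; linarith), div_div]
    -- integrability
    have int1 : IntegrableOn h (Set.Iio (-1)) :=
      (pv_integrableOn_tail (c := α) h₂ (show (0:ℝ) < 1 + x by linarith) measurableSet_Iio
        (fun y hy => by
          simp only [Set.mem_Iio] at hy
          rw [abs_of_pos (by linarith)]; linarith)).congr_fun hc1 measurableSet_Iio
    have int2 : IntegrableOn h (Set.Ico (-1) (x - ε)) :=
      ((pv_integrableOn_compact (c := (1:ℝ)) h₁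
        (by rw [Set.mem_Icc]; push_neg; intro _; linarith)).mono_set
          Set.Ico_subset_Icc_self).congr_fun hc2 measurableSet_Ico
    have int3 : IntegrableOn h (Set.Ioc (x + ε) 1) :=
      ((pv_integrableOn_compact (c := (1:ℝ)) h₁
        (by rw [Set.mem_Icc]; push_neg; intro h'; linarith)).mono_set
          Set.Ioc_subset_Icc_self).congr_fun hc3 measurableSet_Ioc
    have int4 : IntegrableOn h (Set.Ioi 1) :=
      (pv_integrableOn_tail (c := α) h₂ (show (0:ℝ) < 1 - x by linarith) measurableSet_Ioi
        (fun y hy => by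
          simp only [Set.mem_Ioi] at hy
          rw [abs_sub_comm, abs_of_pos (by linarith)]; linarith)).congr_fun hc4 measurableSet_Ioi
    -- the set splits
    have hset : {y : ℝ | ε < |y - x|} = Set.Iio (x - ε) ∪ Set.Ioi (x + ε) := by
      ext y
      simp only [Set.mem_setOf_eq, Set.mem_union, Set.mem_Iio, Set.mem_Ioi, lt_abs]
      constructor
      · rintro (h' | h') <;> [right; left] <;> linarith
      · rintro (h' | h') <;> [right; left] <;> linarith
    have hsplit1 : Set.Iio (x - ε) = Set.Iio (-1) ∪ Set.Ico (-1) (x - ε) :=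
      (Set.Iio_union_Ico_eq_Iio (by linarith)).symm
    have hsplit2 : Set.Ioi (x + ε) = Set.Ioc (x + ε) 1 ∪ Set.Ioi 1 :=
      (Set.Ioc_union_Ioi_eq_Ioi (by linarith)).symm
    have d1 : Disjoint (Set.Iio (-1)) (Set.Ico (-1 : ℝ) (x - ε)) :=
      Set.disjoint_left.mpr fun y hy hy' => absurd hy'.1 (not_le.mpr hy)
    have d2 : Disjoint (Set.Ioc (x + ε) 1) (Set.Ioi (1 : ℝ)) :=
      Set.disjoint_left.mpr fun y hy hy' => absurd hy.2 (not_le.mpr hy')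
    have d0 : Disjoint (Set.Iio (x - ε)) (Set.Ioi (x + ε)) :=
      Set.disjoint_left.mpr fun y hy hy' => by
        simp only [Set.mem_Iio] at hy; simp only [Set.mem_Ioi] at hy'; linarith
    have intL : IntegrableOn h (Set.Iio (x - ε)) := by
      rw [hsplit1]; exact int1.union int2
    have intR : IntegrableOn h (Set.Ioi (x + ε)) := by
      rw [hsplit2]; exact int3.union int4
    calc ∫ y in {y : ℝ | ε < |y - x|}, h y
        = (∫ y in Set.Iio (x - ε), h y) + ∫ y in Set.Ioi (x + ε), h y := by
          rw [hset, setIntegral_union d0 measurableSet_Ioi intL intR]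
      _ = ((∫ y in Set.Iio (-1), h y) + ∫ y in Set.Ico (-1) (x - ε), h y)
          + ((∫ y in Set.Ioc (x + ε) 1, h y) + ∫ y in Set.Ioi 1, h y) := by
          rw [hsplit1, hsplit2, setIntegral_union d1 measurableSet_Ico int1 int2,
            setIntegral_union d2 measurableSet_Ioi int3 int4]
      _ = E ε := by
          rw [← setIntegral_congr_fun measurableSet_Iio hc1,
            ← setIntegral_congr_fun measurableSet_Ico hc2,
            ← setIntegral_congr_fun measurableSet_Ioc hc3,
            ← setIntegral_congr_fun measurableSet_Ioi hc4]
          rw [← integral_Iic_eq_integral_Iio, integral_Ico_eq_integral_Ioo, ← integral_Ioc_eq_integral_Ioo,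
            ← intervalIntegral.integral_of_le (by linarith : (-1:ℝ) ≤ x - ε),
            ← intervalIntegral.integral_of_le (by linarith : x + ε ≤ 1)]
          rw [pv_integral_Iic h₂ (by linarith : (-1:ℝ) < x),
            pv_integral_interval h₁ (by
              rw [Set.uIcc_of_le (by linarith : (-1:ℝ) ≤ x - ε), Set.mem_Icc]
              push_neg; intro _; linarith),
            pv_integral_interval h₁ (by
              rw [Set.uIcc_of_le (by linarith : x + ε ≤ 1), Set.mem_Icc]
              push_neg; intro h'; linarith),
            pv_integral_Ioi h₂ (by linarith : x < 1)]
          have e1 : pvF a₁ x (x - ε) = φ (x - ε) - Real.log ε := by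
            simp only [pvF, hφdef, show x - (x - ε) = ε by ring]
          have e2 : pvF a₁ x (x + ε) = φ (x + ε) - Real.log ε := by
            simp only [pvF, hφdef, show x - (x + ε) = -ε by ring, Real.log_neg_eq_log]
          rw [hEdef, e1, e2]
          ring
  -- Step 2: limit of E
  refine Tendsto.congr' (by filter_upwards [heq] with ε h using h.symm) ?_
  have hφcont : ∀ t : ℝ, ContinuousAt φ t := by
    intro t
    apply ContinuousAt.add
    · exact (continuousAt_const.mul ((Real.continuous_arctan.comp
        (continuous_id.div_const a₁)).continuousAt))
    · exact (ContinuousAt.log ((continuous_const.add (continuous_pow 2)).continuousAt)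
        (by positivity : (0:ℝ) < a₁ ^ 2 + t ^ 2).ne').div_const 2
  have hE : ContinuousAt E 0 := by
    apply ContinuousAt.add _ continuousAt_const
    apply ContinuousAt.mul continuousAt_const
    apply ContinuousAt.add _ continuousAt_const
    exact ((hφcont (x - 0)).comp (by fun_prop)).sub ((hφcont (x + 0)).comp (by fun_prop))
  have hlim : Tendsto E (𝓝[>] 0) (𝓝 (E 0)) := hE.tendsto.mono_left nhdsWithin_le_nhds
  convert hlim using 2
  -- Step 3: algebra, E 0 = target
  have hax1 : (0:ℝ) < a₁ ^ 2 + x ^ 2 := by positivity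
  have hax2 : (0:ℝ) < a₂ ^ 2 + x ^ 2 := by positivity
  have harc : Real.arctan (1 / a₂) = π / 2 - Real.arctan a₂ := by
    rw [one_div]; exact Real.arctan_inv_of_pos h₂
  have hlog1 : Real.log ((1 - x) / (1 + x)) = Real.log (1 - x) - Real.log (1 + x) :=
    Real.log_div (by linarith) (by linarith)
  have hlogneg : ∀ a : ℝ, Real.log (x - 1) = Real.log (1 - x) := fun _ => by
    rw [show x - 1 = -(1 - x) by ring, Real.log_neg_eq_log]
  simp only [hEdef, hφdef, pvF, sub_zero, add_zero]
  rw [hlog1, hlogneg 0]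
  rw [show ((-1:ℝ)) / a₁ = -(1 / a₁) by ring, show ((-1:ℝ)) / a₂ = -(1 / a₂) by ring,
    Real.arctan_neg, Real.arctan_neg, harc]
  have h1 : Real.log (x - -1) = Real.log (1 + x) := by ring_nf
  rw [h1]
  field_simp
  ring
end

section
/- Let a₁, a₂ > 0 and α ∈ ℝ with 1/(a₁² + 1) − α/(a₂² + 1) ≠ 0, and define f : ℝ → ℝ by f(y) = 1/(a₁² + y²) for |y| ≤ 1 and f(y) = α/(a₂² + y²) for |y| > 1 (so f is discontinuous at y = 1). Then the principal value h(x) := PV∫_ℝ f(y)/(x−y) dy (which exists for every x ∈ (−1,1)) satisfies |h(x)| → ∞ as x → 1⁻; i.e., the Hilbert-transform integral of a function with a jump discontinuity diverges logarithmically at the jump. -/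
open MeasureTheory Filter Set Topology

open Real


noncomputable def Faux (a x y : ℝ) : ℝ :=
  (1/(a^2+x^2)) * ((x/a) * Real.arctan (y/a) + Real.log (a^2 + y^2)/2 - Real.log (x - y))

noncomputable def Gaux (a x y : ℝ) : ℝ :=
  (1/(a^2+x^2)) * ((x/a) * Real.arctan (y/a) + Real.log (a^2 + y^2)/2)

noncomputable def Hfun (a₁ a₂ α x : ℝ) : ℝ :=
  (1/(a₁^2+x^2)) * ((2*x/a₁) * Real.arctan (1/a₁) + (Real.log (1+x) - Real.log (1-x)))
  + (α/(a₂^2+x^2)) * ((x/a₂) * (π - 2*Real.arctan (1/a₂)) - (Real.log (1+x) - Real.log (1-x)))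

lemma Faux_hasDerivAt (a x y : ℝ) (ha : 0 < a) (hxy : y ≠ x) :
    HasDerivAt (Faux a x) (1/((a^2+y^2)*(x-y))) y := by
  have hay : a^2 + y^2 ≠ 0 := by positivity
  have hxy' : x - y ≠ 0 := sub_ne_zero.2 (Ne.symm hxy)
  have h1 : HasDerivAt (fun z : ℝ => z/a) (1/a) y := (hasDerivAt_id y).div_const a
  have h2 : HasDerivAt (fun z : ℝ => Real.arctan (z/a)) ((1/(1+(y/a)^2)) * (1/a)) y :=
    by have := (Real.hasDerivAt_arctan (y/a)).comp y h1; exact this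
  have h3 : HasDerivAt (fun z : ℝ => a^2 + z^2) (2*y) y := by
    simpa using (hasDerivAt_pow 2 y).const_add (a^2)
  have h4 : HasDerivAt (fun z : ℝ => Real.log (a^2 + z^2)) ((a^2+y^2)⁻¹ * (2*y)) y :=
    by have := (Real.hasDerivAt_log hay).comp y h3; exact this
  have h5 : HasDerivAt (fun z : ℝ => x - z) (-1) y := (hasDerivAt_id y).const_sub x
  have h6 : HasDerivAt (fun z : ℝ => Real.log (x - z)) ((x-y)⁻¹ * (-1)) y :=
    (Real.hasDerivAt_log hxy').comp y h5
  have h := (((h2.const_mul (x/a)).add (h4.div_const 2)).sub h6).const_mul (1/(a^2+x^2))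
  refine h.congr_deriv ?_
  have ha' : a ≠ 0 := ne_of_gt ha
  have hax : a^2 + x^2 ≠ 0 := by positivity
  field_simp
  ring

lemma Gaux_continuous (a x : ℝ) (ha : 0 < a) : Continuous (Gaux a x) := by
  unfold Gaux
  have h1 : Continuous fun y : ℝ => Real.arctan (y/a) :=
    Real.continuous_arctan.comp (continuous_id.div_const a)
  have h2 : Continuous fun y : ℝ => Real.log (a^2 + y^2) :=
    (continuous_const.add (continuous_pow 2)).log fun y => by simp only [Pi.add_apply]; positivity
  exact continuous_const.mul (((continuous_const.mul h1).add (h2.div_const 2)))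

lemma logpart_tendsto (a x : ℝ) (ha : 0 < a) (l : Filter ℝ)
    (hl : Tendsto (fun y : ℝ => y⁻¹) l (𝓝 0))
    (hev : ∀ᶠ y in l, y ≠ x ∧ y ≠ 0) :
    Tendsto (fun y => Real.log (a^2 + y^2)/2 - Real.log (x - y)) l (𝓝 0) := by
  have hu : Tendsto (fun y : ℝ => ((a*y⁻¹)^2 + 1)/((x*y⁻¹ - 1)^2)) l (𝓝 1) := by
    have h1 : Tendsto (fun y : ℝ => (a*y⁻¹)^2 + 1) l (𝓝 1) := by
      have := ((hl.const_mul a).pow 2).add_const 1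
      simpa using this
    have h2 : Tendsto (fun y : ℝ => (x*y⁻¹ - 1)^2) l (𝓝 1) := by
      have := ((hl.const_mul x).sub_const 1).pow 2
      simpa using this
    simpa [Pi.div_def] using h1.div h2 (by norm_num)
  have hlog : Tendsto (fun y : ℝ => Real.log (((a*y⁻¹)^2 + 1)/((x*y⁻¹ - 1)^2))) l (𝓝 0) := by
    have := (Real.continuousAt_log (by norm_num : (1:ℝ) ≠ 0)).tendsto.comp hu
    simpa [Function.comp_def] using this
  have := hlog.div_const 2
  rw [zero_div] at this
  refine this.congr' ?_
  filter_upwards [hev] with y hy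
  obtain ⟨hyx, hy0⟩ := hy
  have hxy : x - y ≠ 0 := sub_ne_zero.2 (Ne.symm hyx)
  have hay : a^2 + y^2 ≠ 0 := by positivity
  have key : ((a*y⁻¹)^2 + 1)/((x*y⁻¹ - 1)^2) = (a^2+y^2)/((x-y)^2) := by
    field_simp
  rw [key, Real.log_div hay (pow_ne_zero 2 hxy), Real.log_pow]
  push_cast
  ring

lemma Faux_tendsto_atTop (a x : ℝ) (ha : 0 < a) :
    Tendsto (Faux a x) atTop (𝓝 ((1/(a^2+x^2)) * ((x/a) * (π/2)))) := by
  have harc : Tendsto (fun y : ℝ => Real.arctan (y/a)) atTop (𝓝 (π/2)) := by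
    have h1 : Tendsto (fun y : ℝ => y/a) atTop atTop := tendsto_id.atTop_div_const ha
    exact (Real.tendsto_arctan_atTop.mono_right nhdsWithin_le_nhds).comp h1
  have hlog := logpart_tendsto a x ha atTop tendsto_inv_atTop_zero
    (by filter_upwards [eventually_gt_atTop (max x 0)] with y hy
        exact ⟨ne_of_gt (lt_of_le_of_lt (le_max_left _ _) hy),
               ne_of_gt (lt_of_le_of_lt (le_max_right _ _) hy)⟩)
  have := ((harc.const_mul (x/a)).add hlog).const_mul (1/(a^2+x^2))
  simp only [add_zero] at this
  refine this.congr fun y => ?_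
  unfold Faux; ring

lemma Faux_tendsto_atBot (a x : ℝ) (ha : 0 < a) :
    Tendsto (Faux a x) atBot (𝓝 ((1/(a^2+x^2)) * ((x/a) * (-(π/2))))) := by
  have harc : Tendsto (fun y : ℝ => Real.arctan (y/a)) atBot (𝓝 (-(π/2))) := by
    have h1 : Tendsto (fun y : ℝ => y/a) atBot atBot := tendsto_id.atBot_div_const ha
    exact (Real.tendsto_arctan_atBot.mono_right nhdsWithin_le_nhds).comp h1
  have hinv : Tendsto (fun y : ℝ => y⁻¹) atBot (𝓝 (0:ℝ)) := by
    have := ((tendsto_inv_atTop_zero : Tendsto (fun y : ℝ => y⁻¹) atTop (𝓝 0)).comp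
      (tendsto_neg_atBot_atTop : Tendsto (Neg.neg : ℝ → ℝ) atBot atTop)).neg
    simpa [Function.comp_def, inv_neg] using this
  have hlog := logpart_tendsto a x ha atBot hinv
    (by filter_upwards [eventually_lt_atBot (min x 0)] with y hy
        exact ⟨ne_of_lt (lt_of_lt_of_le hy (min_le_left _ _)),
               ne_of_lt (lt_of_lt_of_le hy (min_le_right _ _))⟩)
  have := ((harc.const_mul (x/a)).add hlog).const_mul (1/(a^2+x^2))
  simp only [add_zero] at this
  refine this.congr fun y => ?_
  unfold Faux; ring

lemma integrable_inv_sq_add (a : ℝ) (ha : 0 < a) :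
    Integrable (fun y : ℝ => 1/(a^2+y^2)) := by
  refine (integrable_inv_one_add_sq.const_mul (max 1 (1/a^2))).mono' ?_ ?_
  · exact (measurable_const.div ((measurable_const.add (measurable_id.pow_const 2)))).aestronglyMeasurable
  · refine Filter.Eventually.of_forall fun y => ?_
    have hay : (0:ℝ) < a^2 + y^2 := by positivity
    have h1y : (0:ℝ) < 1 + y^2 := by positivity
    have key : (1+y^2) ≤ max 1 (1/a^2) * (a^2+y^2) := by
      rcases le_total 1 a with h|h
      · have hc : (1:ℝ) ≤ max 1 (1/a^2) := le_max_left _ _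
        nlinarith
      · have hc : (1/a^2:ℝ) ≤ max 1 (1/a^2) := le_max_right _ _
        have ha2 : (0:ℝ) < a^2 := by positivity
        have h3 : 1 + y^2 ≤ (1/a^2)*(a^2+y^2) := by
          have ha1 : a^2 ≤ 1 := by nlinarith
          rw [div_mul_eq_mul_div, le_div_iff₀ ha2]
          nlinarith [mul_le_mul_of_nonneg_left ha1 (sq_nonneg y)]
        nlinarith [mul_le_mul_of_nonneg_right hc (le_of_lt hay)]
    rw [Real.norm_eq_abs, abs_of_pos (by positivity : (0:ℝ) < 1/(a^2+y^2))]
    have h4 : 1/(a^2+y^2) ≤ max 1 (1/a^2)/(1+y^2) := by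
      rw [div_le_div_iff₀ hay h1y]; linarith
    simpa [div_eq_mul_inv] using h4

/-- If `1/(a₁² + 1) − α/(a₂² + 1) ≠ 0` (so the piecewise function `f`
has a jump at `y = 1`), the principal value `h(x) = PV∫_ℝ f(y)/(x−y) dy` exists for
every `x ∈ (−1,1)` and `|h(x)| → ∞` as `x → 1⁻`. -/
theorem pv_discontinuous_piecewise_blowup (a₁ a₂ α : ℝ) (h₁ : 0 < a₁) (h₂ : 0 < a₂)
    (hjump : 1 / (a₁ ^ 2 + 1) - α / (a₂ ^ 2 + 1) ≠ 0) :
    ∃ h : ℝ → ℝ,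
      (∀ x ∈ Ioo (-1 : ℝ) 1,
        Tendsto
          (fun ε : ℝ => ∫ y in {y : ℝ | ε < |y - x|},
            (if |y| ≤ 1 then 1 / (a₁ ^ 2 + y ^ 2) else α / (a₂ ^ 2 + y ^ 2)) / (x - y))
          (𝓝[>] 0) (𝓝 (h x)))
      ∧ Tendsto (fun x => |h x|) (𝓝[<] (1 : ℝ)) atTop := by
  refine ⟨fun x => Hfun a₁ a₂ α x, ?_, ?_⟩
  · -- PV convergence
    rintro x ⟨hx1, hx2⟩
    set f : ℝ → ℝ := fun y => (if |y| ≤ 1 then 1 / (a₁ ^ 2 + y ^ 2) else α / (a₂ ^ 2 + y ^ 2)) / (x - y) with hf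
    set g₁ : ℝ → ℝ := fun y => 1/((a₁^2+y^2)*(x-y)) with hg₁
    set g₂ : ℝ → ℝ := fun y => 1/((a₂^2+y^2)*(x-y)) with hg₂
    have hfg₁ : ∀ y : ℝ, |y| ≤ 1 → f y = g₁ y := by
      intro y hy; simp only [hf, hg₁, if_pos hy, div_div]
    have hfg₂ : ∀ y : ℝ, 1 < |y| → f y = α * g₂ y := by
      intro y hy; simp only [hf, hg₂, if_neg (not_le.2 hy), div_div, mul_one_div]
    have hg₂m : Measurable g₂ :=
      measurable_const.div ((measurable_const.add (measurable_id.pow_const 2)).mul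
        (measurable_const.sub measurable_id))
    have hIoi1 : IntegrableOn g₂ (Ioi 1) := by
      refine Integrable.mono' (((integrable_inv_sq_add a₂ h₂).const_mul (1/(1-x))).integrableOn)
        hg₂m.aestronglyMeasurable ?_
      filter_upwards [ae_restrict_mem measurableSet_Ioi] with y hy
      have h1y : (1:ℝ) < y := hy
      have hp : (0:ℝ) < a₂^2 + y^2 := by positivity
      have hyx : (0:ℝ) < y - x := by linarith
      have h1x : (0:ℝ) < 1 - x := by linarith
      have habs : |g₂ y| = 1/((a₂^2+y^2)*(y-x)) := by
        rw [hg₂]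
        rw [abs_div, abs_one, abs_mul, abs_of_pos hp, abs_of_neg (by linarith : x - y < 0)]
        ring_nf
      rw [Real.norm_eq_abs, habs, mul_one_div, div_div]
      refine one_div_le_one_div_of_le (by positivity) ?_
      nlinarith
    have hIio1 : IntegrableOn g₂ (Iio (-1)) := by
      refine Integrable.mono' (((integrable_inv_sq_add a₂ h₂).const_mul (1/(1+x))).integrableOn)
        hg₂m.aestronglyMeasurable ?_
      filter_upwards [ae_restrict_mem measurableSet_Iio] with y hy
      have h1y : y < -1 := hy
      have hp : (0:ℝ) < a₂^2 + y^2 := by positivity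
      have hxy : (0:ℝ) < x - y := by linarith
      have h1x : (0:ℝ) < 1 + x := by linarith
      have habs : |g₂ y| = 1/((a₂^2+y^2)*(x-y)) := by
        rw [hg₂, abs_div, abs_one, abs_mul, abs_of_pos hp, abs_of_pos hxy]
      rw [Real.norm_eq_abs, habs, mul_one_div, div_div]
      refine one_div_le_one_div_of_le (by positivity) ?_
      nlinarith
    set δ : ℝ := (min (1-x) (1+x))/2 with hδdef
    have hδ : 0 < δ := by
      have h := lt_min (by linarith : (0:ℝ) < 1-x) (by linarith : (0:ℝ) < 1+x)
      rw [hδdef]; linarith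
    have key : ∀ ε : ℝ, ε ∈ Ioo 0 δ →
        (∫ y in {y : ℝ | ε < |y - x|}, f y)
          = Hfun a₁ a₂ α x + (Gaux a₁ x (x-ε) - Gaux a₁ x (x+ε)) := by
      rintro ε ⟨hε0, hεδ⟩
      have hm1 : δ ≤ (1-x)/2 := by
        have := min_le_left (1-x) (1+x); rw [hδdef]; linarith
      have hm2 : δ ≤ (1+x)/2 := by
        have := min_le_right (1-x) (1+x); rw [hδdef]; linarith
      have hε1 : -1 < x - ε := by linarith
      have hε2 : x + ε < 1 := by linarith
      have hD₁ : ∀ y : ℝ, y ≠ x → HasDerivAt (Faux a₁ x) (g₁ y) y :=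
        fun y hy => Faux_hasDerivAt a₁ x y h₁ hy
      have hD₂ : ∀ y : ℝ, y ≠ x → HasDerivAt (Faux a₂ x) (g₂ y) y :=
        fun y hy => Faux_hasDerivAt a₂ x y h₂ hy
      have hg₁cont : ∀ s : Set ℝ, (∀ y ∈ s, y ≠ x) → ContinuousOn g₁ s := by
        intro s hs
        refine continuousOn_const.div ?_ ?_
        · exact ((continuous_const.add (continuous_pow 2)).mul
            (continuous_const.sub continuous_id)).continuousOn
        · intro y hy
          have hne : x - y ≠ 0 := sub_ne_zero.2 (Ne.symm (hs y hy))
          have hp : (a₁:ℝ)^2 + y^2 ≠ 0 := by positivity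
          exact mul_ne_zero hp hne
      have hset : {y : ℝ | ε < |y - x|} = Iio (x-ε) ∪ Ioi (x+ε) := by
        ext y
        simp only [mem_setOf_eq, mem_union, mem_Iio, mem_Ioi, lt_abs]
        constructor
        · rintro (h | h)
          · right; linarith
          · left; linarith
        · rintro (h | h)
          · right; linarith
          · left; linarith
      have hIf_Iio1 : IntegrableOn f (Iio (-1)) := by
        refine IntegrableOn.congr_fun (hIio1.const_mul α) ?_ measurableSet_Iio
        intro y hy
        exact (hfg₂ y (by
          rw [abs_of_neg (by linarith [mem_Iio.1 hy] : y < 0)]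
          linarith [mem_Iio.1 hy])).symm
      have hIf_Ioi1 : IntegrableOn f (Ioi 1) := by
        refine IntegrableOn.congr_fun (hIoi1.const_mul α) ?_ measurableSet_Ioi
        intro y hy
        exact (hfg₂ y (by
          rw [abs_of_pos (by linarith [mem_Ioi.1 hy] : (0:ℝ) < y)]
          exact mem_Ioi.1 hy)).symm
      have hIf_mid₁ : IntegrableOn f (Ico (-1) (x-ε)) := by
        have hcont := hg₁cont (Icc (-1) (x-ε)) (fun y hy => by
          intro h; rw [h] at hy; linarith [hy.2])
        have hi : IntegrableOn g₁ (Ico (-1) (x-ε)) :=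
          (hcont.integrableOn_Icc).mono_set Ico_subset_Icc_self
        refine hi.congr_fun ?_ measurableSet_Ico
        intro y hy
        exact (hfg₁ y (abs_le.2 ⟨hy.1, by linarith [hy.2]⟩)).symm
      have hIf_mid₂ : IntegrableOn f (Ioc (x+ε) 1) := by
        have hcont := hg₁cont (Icc (x+ε) 1) (fun y hy => by
          intro h; rw [h] at hy; linarith [hy.1])
        have hi : IntegrableOn g₁ (Ioc (x+ε) 1) :=
          (hcont.integrableOn_Icc).mono_set Ioc_subset_Icc_self
        refine hi.congr_fun ?_ measurableSet_Ioc
        intro y hy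
        exact (hfg₁ y (abs_le.2 ⟨by linarith [hy.1], hy.2⟩)).symm
      have hsplit₁ : Iio (x-ε) = Iio (-1) ∪ Ico (-1) (x-ε) :=
        (Iio_union_Ico_eq_Iio (by linarith)).symm
      have hsplit₂ : Ioi (x+ε) = Ioc (x+ε) 1 ∪ Ioi 1 :=
        (Ioc_union_Ioi_eq_Ioi (by linarith)).symm
      have hIa : ∫ y in Iio (-1:ℝ), f y
          = α * (Faux a₂ x (-1) - (1/(a₂^2+x^2)) * ((x/a₂) * (-(π/2)))) := by
        rw [setIntegral_congr_fun measurableSet_Iio (fun y hy => hfg₂ y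
            (by rw [abs_of_neg (by linarith [mem_Iio.1 hy] : y < 0)]; linarith [mem_Iio.1 hy])),
          integral_const_mul, ← integral_Iic_eq_integral_Iio,
          integral_Iic_of_hasDerivAt_of_tendsto
            ((hD₂ (-1) (by intro h; rw [h] at hx1; exact lt_irrefl x hx1)).continuousAt.continuousWithinAt)
            (fun y hy => hD₂ y (by intro h; rw [h] at hy; exact absurd (mem_Iio.1 hy) (by push_neg; linarith)))
            (hIio1.congr_set_ae Iio_ae_eq_Iic.symm)
            (Faux_tendsto_atBot a₂ x h₂)]
      have hIb : ∫ y in Ico (-1:ℝ) (x-ε), f y = Faux a₁ x (x-ε) - Faux a₁ x (-1) := by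
        rw [setIntegral_congr_fun measurableSet_Ico (fun y hy =>
            hfg₁ y (abs_le.2 ⟨hy.1, by linarith [hy.2]⟩)),
          integral_Ico_eq_integral_Ioo, ← integral_Ioc_eq_integral_Ioo,
          ← intervalIntegral.integral_of_le (by linarith : (-1:ℝ) ≤ x-ε)]
        refine intervalIntegral.integral_eq_sub_of_hasDerivAt (fun y hy => ?_) ?_
        · rw [uIcc_of_le (by linarith : (-1:ℝ) ≤ x-ε)] at hy
          exact hD₁ y (by intro h; rw [h] at hy; linarith [hy.2])
        · refine (hg₁cont (uIcc (-1) (x-ε)) ?_).intervalIntegrable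
          intro y hy
          rw [uIcc_of_le (by linarith : (-1:ℝ) ≤ x-ε)] at hy
          intro h; rw [h] at hy; linarith [hy.2]
      have hIc : ∫ y in Ioc (x+ε) (1:ℝ), f y = Faux a₁ x 1 - Faux a₁ x (x+ε) := by
        rw [setIntegral_congr_fun measurableSet_Ioc (fun y hy =>
            hfg₁ y (abs_le.2 ⟨by linarith [hy.1], hy.2⟩)),
          ← intervalIntegral.integral_of_le (by linarith : x+ε ≤ (1:ℝ))]
        refine intervalIntegral.integral_eq_sub_of_hasDerivAt (fun y hy => ?_) ?_
        · rw [uIcc_of_le (by linarith : x+ε ≤ (1:ℝ))] at hy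
          exact hD₁ y (by intro h; rw [h] at hy; linarith [hy.1])
        · refine (hg₁cont (uIcc (x+ε) 1) ?_).intervalIntegrable
          intro y hy
          rw [uIcc_of_le (by linarith : x+ε ≤ (1:ℝ))] at hy
          intro h; rw [h] at hy; linarith [hy.1]
      have hId : ∫ y in Ioi (1:ℝ), f y
          = α * ((1/(a₂^2+x^2)) * ((x/a₂) * (π/2)) - Faux a₂ x 1) := by
        rw [setIntegral_congr_fun measurableSet_Ioi (fun y hy => hfg₂ y
            (by rw [abs_of_pos (by linarith [mem_Ioi.1 hy] : (0:ℝ) < y)]; exact mem_Ioi.1 hy)),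
          integral_const_mul,
          integral_Ioi_of_hasDerivAt_of_tendsto'
            (fun y hy => hD₂ y (by intro h; rw [h] at hy; exact absurd (mem_Ici.1 hy) (by push_neg; linarith)))
            hIoi1 (Faux_tendsto_atTop a₂ x h₂)]
      rw [hset, setIntegral_union (by
            rw [Set.disjoint_left]; intro y hy1 hy2
            exact absurd (mem_Ioi.1 hy2) (by push_neg; linarith [mem_Iio.1 hy1]))
          measurableSet_Ioi
          (by rw [hsplit₁]; exact hIf_Iio1.union hIf_mid₁)
          (by rw [hsplit₂]; exact hIf_mid₂.union hIf_Ioi1),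
        hsplit₁, hsplit₂,
        setIntegral_union (by
            rw [Set.disjoint_left]; intro y hy1 hy2
            exact absurd hy2.1 (by push_neg; linarith [mem_Iio.1 hy1]))
          measurableSet_Ico hIf_Iio1 hIf_mid₁,
        setIntegral_union (by
            rw [Set.disjoint_left]; intro y hy1 hy2
            exact absurd (mem_Ioi.1 hy2) (by push_neg; linarith [hy1.2]))
          measurableSet_Ioi hIf_mid₂ hIf_Ioi1,
        hIa, hIb, hIc, hId]
      unfold Faux Gaux Hfun
      rw [show x - (x-ε) = ε from by ring, show x - (x+ε) = -ε from by ring,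
        Real.log_neg_eq_log,
        show x - (1:ℝ) = -(1-x) from by ring, Real.log_neg_eq_log,
        show x - (-1:ℝ) = 1+x from by ring,
        show (-1:ℝ)/a₁ = -(1/a₁) from by ring, Real.arctan_neg,
        show (-1:ℝ)/a₂ = -(1/a₂) from by ring, Real.arctan_neg,
        show ((-1:ℝ))^2 = 1 from by norm_num, one_pow]
      ring
    have hGc : Continuous fun ε : ℝ => Gaux a₁ x (x-ε) - Gaux a₁ x (x+ε) :=
      ((Gaux_continuous a₁ x h₁).comp (continuous_const.sub continuous_id)).sub
        ((Gaux_continuous a₁ x h₁).comp (continuous_const.add continuous_id))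
    have hT : Tendsto (fun ε : ℝ => Hfun a₁ a₂ α x + (Gaux a₁ x (x-ε) - Gaux a₁ x (x+ε)))
        (𝓝[>] (0:ℝ)) (𝓝 (Hfun a₁ a₂ α x)) := by
      have h0 : Tendsto (fun ε : ℝ => Gaux a₁ x (x-ε) - Gaux a₁ x (x+ε)) (𝓝 0) (𝓝 0) := by
        have := hGc.tendsto 0
        simpa using this
      have := (tendsto_const_nhds (x := Hfun a₁ a₂ α x) (f := 𝓝[>] (0:ℝ))).add
        (h0.mono_left nhdsWithin_le_nhds)
      simpa using this
    refine hT.congr' ?_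
    filter_upwards [Ioo_mem_nhdsGT_of_mem (⟨le_refl (0:ℝ), hδ⟩ : (0:ℝ) ∈ Ico 0 δ)] with ε hε
    exact (key ε hε).symm
  · -- blow-up
    have hcont_inv₁ : Continuous fun x : ℝ => 1/(a₁^2+x^2) :=
      continuous_const.div (continuous_const.add (continuous_pow 2)) fun x => by positivity
    have hcont_inv₂ : Continuous fun x : ℝ => α/(a₂^2+x^2) :=
      continuous_const.div (continuous_const.add (continuous_pow 2)) fun x => by positivity
    have hQt : Tendsto (fun x : ℝ => 1/(a₁^2+x^2) - α/(a₂^2+x^2)) (𝓝[<] (1:ℝ))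
        (𝓝 (1/(a₁^2+1) - α/(a₂^2+1))) := by
      have := ((hcont_inv₁.sub hcont_inv₂).tendsto 1).mono_left
        (nhdsWithin_le_nhds (s := Iio (1:ℝ)))
      simpa [Pi.sub_def] using this
    have hRcont : Continuous fun x : ℝ => (1/(a₁^2+x^2)) * ((2*x/a₁) * Real.arctan (1/a₁))
        + (α/(a₂^2+x^2)) * ((x/a₂) * (π - 2*Real.arctan (1/a₂))) := by
      apply Continuous.add
      · exact hcont_inv₁.mul (((continuous_const.mul continuous_id).div_const a₁).mul continuous_const)
      · exact hcont_inv₂.mul ((continuous_id.div_const a₂).mul continuous_const)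
    set R : ℝ → ℝ := fun x => (1/(a₁^2+x^2)) * ((2*x/a₁) * Real.arctan (1/a₁))
        + (α/(a₂^2+x^2)) * ((x/a₂) * (π - 2*Real.arctan (1/a₂))) with hRdef
    have hRt : Tendsto R (𝓝[<] (1:ℝ)) (𝓝 (R 1)) :=
      (hRcont.tendsto 1).mono_left nhdsWithin_le_nhds
    have hLtop : Tendsto (fun x : ℝ => Real.log (1+x) - Real.log (1-x)) (𝓝[<] (1:ℝ)) atTop := by
      have h1 : Tendsto (fun x : ℝ => 1-x) (𝓝[<] (1:ℝ)) (𝓝[>] (0:ℝ)) := by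
        rw [tendsto_nhdsWithin_iff]
        constructor
        · have := ((continuous_const.sub continuous_id :
              Continuous fun x : ℝ => 1 - x).tendsto 1).mono_left
            (nhdsWithin_le_nhds (s := Iio (1:ℝ)))
          simpa [Pi.sub_def] using this
        · filter_upwards [self_mem_nhdsWithin] with y hy
          simp only [mem_Ioi, sub_pos]
          exact hy
      have hbot : Tendsto (fun x : ℝ => Real.log (1-x)) (𝓝[<] (1:ℝ)) atBot :=
        Real.tendsto_log_nhdsGT_zero.comp h1
      have htop : Tendsto (fun x : ℝ => -Real.log (1-x)) (𝓝[<] (1:ℝ)) atTop :=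
        (tendsto_neg_atBot_atTop : Tendsto (Neg.neg : ℝ → ℝ) atBot atTop).comp hbot
      have hfin : Tendsto (fun x : ℝ => Real.log (1+x)) (𝓝[<] (1:ℝ)) (𝓝 (Real.log 2)) := by
        have hc : ContinuousAt (fun x : ℝ => Real.log (1+x)) 1 := by
          have := (Real.continuousAt_log (by norm_num : (1:ℝ)+1 ≠ 0)).comp
            ((continuous_const.add continuous_id).continuousAt (x := (1:ℝ)))
          simpa [Function.comp_def] using this
        have := hc.tendsto.mono_left (nhdsWithin_le_nhds (s := Iio (1:ℝ)))
        norm_num at this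
        exact this
      have hsum := tendsto_atTop_add_left_of_le' (𝓝[<] (1:ℝ)) (Real.log 2 - 1)
        (by filter_upwards [hfin.eventually (eventually_ge_nhds
          (by linarith : Real.log 2 - 1 < Real.log 2))] with y hy using hy) htop
      refine hsum.congr fun x => ?_
      ring
    have hHeq : ∀ x : ℝ, Hfun a₁ a₂ α x
        = (1/(a₁^2+x^2) - α/(a₂^2+x^2)) * (Real.log (1+x) - Real.log (1-x)) + R x := by
      intro x; rw [hRdef]; unfold Hfun; ring
    have hq : 1 / (a₁ ^ 2 + 1) - α / (a₂ ^ 2 + 1) ≠ 0 := hjump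
    rcases hq.lt_or_gt with hneg | hpos
    · have hmul := Filter.Tendsto.neg_mul_atTop hneg hQt hLtop
      have hsum : Tendsto (fun x : ℝ => (1/(a₁^2+x^2) - α/(a₂^2+x^2)) * (Real.log (1+x) - Real.log (1-x)) + R x)
          (𝓝[<] (1:ℝ)) atBot :=
        tendsto_atBot_add_right_of_ge' _ (R 1 + 1) hmul
          (by filter_upwards [hRt.eventually (eventually_le_nhds (by linarith : R 1 < R 1 + 1))] with y hy using hy)
      have habs := tendsto_abs_atBot_atTop.comp hsum
      refine habs.congr fun x => ?_
      simp only [Function.comp_apply]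
      rw [← hHeq x]
    · have hmul := Filter.Tendsto.pos_mul_atTop hpos hQt hLtop
      have hsum : Tendsto (fun x : ℝ => (1/(a₁^2+x^2) - α/(a₂^2+x^2)) * (Real.log (1+x) - Real.log (1-x)) + R x)
          (𝓝[<] (1:ℝ)) atTop :=
        tendsto_atTop_add_right_of_le' _ (R 1 - 1) hmul
          (by filter_upwards [hRt.eventually (eventually_ge_nhds (by linarith : R 1 - 1 < R 1))] with y hy using hy)
      have habs := tendsto_abs_atTop_atTop.comp hsum
      refine habs.congr fun x => ?_
      simp only [Function.comp_apply]
      rw [← hHeq x]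
end
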